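/- Let κ > 0, γ > 0, let D be the open unit ball B(0,1) in ℝ², let 𝐌₀(r) := Z₀⁻¹((1−|r|²)/(1+γ|r|²))^{κ/(2(1+γ))} with Z₀ := ∫_D ((1−|s|²)/(1+γ|s|²))^{κ/(2(1+γ))} ds, and let 𝒜(r) := 3|r|² I − 2 r⊗r. Then for every twice continuously differentiable function f : D → ℝ and every r ∈ D: div(κ (r/(1−|r|²)) f(r) + (I + γ𝒜(r))∇f(r)) = div(𝐌₀(r)(I + γ𝒜(r))∇(f/𝐌₀)(r)); i.e., the corrected Fokker–Planck operator can be written in divergence form with respect to the weight 𝐌₀. -/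

import Mathlib

open MeasureTheory Real
open scoped RealInnerProductSpace

noncomputable section

abbrev E2 : Type := EuclideanSpace ℝ (Fin 2)

/-- The divergence of a vector field `F : ℝ² → ℝ²` at a point. -/
def diverg (F : E2 → E2) (r : E2) : ℝ :=
  ∑ i : Fin 2, fderiv ℝ (fun y => F y i) r (EuclideanSpace.single i (1 : ℝ))

/-- The action of the matrix `𝒜(r) = 3|r|² I - 2 r⊗r` on a vector. -/
def Acal (r v : E2) : E2 := (3 * ‖r‖ ^ 2) • v - (2 * ⟪r, v⟫) • r

lemma hasGradientAt_of_fderiv {φ : E2 → ℝ} {v y : E2}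
    (h : HasFDerivAt φ (InnerProductSpace.toDual ℝ E2 v) y) : HasGradientAt φ v y :=
  hasGradientAt_iff_hasFDerivAt.mpr h

lemma hasFDerivAt_normSq (y : E2) :
    HasFDerivAt (fun z : E2 => ‖z‖ ^ 2) (InnerProductSpace.toDual ℝ E2 ((2:ℝ) • y)) y := by
  have h := (hasFDerivAt_id (𝕜 := ℝ) y).inner ℝ (hasFDerivAt_id y)
  refine (h.congr_fderiv ?_).congr_of_eventuallyEq ?_
  · ext w
    simp [InnerProductSpace.toDual_apply_apply, real_inner_smul_left, two_mul, real_inner_comm]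
  · filter_upwards with z
    simp only [id]
    exact (real_inner_self_eq_norm_sq z).symm

set_option maxHeartbeats 1000000 in
/-- Divergence form of the corrected Fokker–Planck operator: for every `C²` function `f`
on the open unit ball `D ⊂ ℝ²` and every `r ∈ D`,
`div(κ(r/(1-|r|²))f + (I+γ𝒜)∇f) = div(𝐌₀ (I+γ𝒜) ∇(f/𝐌₀))`. -/
theorem fokker_planck_divergence_form (κ γ : ℝ) (hκ : 0 < κ) (hγ : 0 < γ)
    (Z₀ : ℝ) (hZ₀ : Z₀ = ∫ s in Metric.ball (0 : E2) 1,
      ((1 - ‖s‖ ^ 2) / (1 + γ * ‖s‖ ^ 2)) ^ (κ / (2 * (1 + γ))))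
    (M₀ : E2 → ℝ) (hM₀ : ∀ r, M₀ r = Z₀⁻¹ *
      ((1 - ‖r‖ ^ 2) / (1 + γ * ‖r‖ ^ 2)) ^ (κ / (2 * (1 + γ))))
    (f : E2 → ℝ) (hf : ContDiffOn ℝ 2 f (Metric.ball (0 : E2) 1)) :
    ∀ r ∈ Metric.ball (0 : E2) 1,
      diverg (fun y => (κ / (1 - ‖y‖ ^ 2) * f y) • y
          + (gradient f y + γ • Acal y (gradient f y))) r
        = diverg (fun y => M₀ y •
            (gradient (fun z => f z / M₀ z) y
              + γ • Acal y (gradient (fun z => f z / M₀ z) y))) r := by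
  set α : ℝ := κ / (2 * (1 + γ)) with hα_def
  have hγ1 : (0:ℝ) < 1 + γ := by linarith
  have hα : 0 < α := by positivity
  -- positivity of Z₀
  have hZpos : 0 < Z₀ := by
    rw [hZ₀]
    have hbase : Continuous fun s : E2 => (1 - ‖s‖ ^ 2) / (1 + γ * ‖s‖ ^ 2) := by
      apply Continuous.div
      · fun_prop
      · fun_prop
      · intro x; positivity
    have hFcont : Continuous fun s : E2 => ((1 - ‖s‖ ^ 2) / (1 + γ * ‖s‖ ^ 2)) ^ α := by
      rw [continuous_iff_continuousAt]
      intro x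
      exact (Real.continuousAt_rpow_const _ _ (Or.inr hα.le)).comp hbase.continuousAt
    have hInt : IntegrableOn (fun s : E2 => ((1 - ‖s‖ ^ 2) / (1 + γ * ‖s‖ ^ 2)) ^ α)
        (Metric.ball (0 : E2) 1) := by
      exact ((hFcont.continuousOn).integrableOn_compact
        (isCompact_closedBall (0:E2) 1)).mono_set Metric.ball_subset_closedBall
    have hpos : ∀ s ∈ Metric.ball (0 : E2) 1,
        0 < ((1 - ‖s‖ ^ 2) / (1 + γ * ‖s‖ ^ 2)) ^ α := by
      intro s hs
      have h1 : ‖s‖ < 1 := by simpa using hs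
      have h2 : ‖s‖ ^ 2 < 1 := by
        have := pow_lt_one₀ (norm_nonneg s) h1 (two_ne_zero)
        simpa using this
      have : 0 < (1 - ‖s‖ ^ 2) / (1 + γ * ‖s‖ ^ 2) := by
        apply div_pos <;> nlinarith [norm_nonneg s, sq_nonneg ‖s‖]
      exact Real.rpow_pos_of_pos this α
    rw [setIntegral_pos_iff_support_of_nonneg_ae]
    · refine lt_of_lt_of_le (Metric.measure_ball_pos volume (0:E2) one_pos) (measure_mono ?_)
      intro s hs
      exact ⟨ne_of_gt (hpos s hs), hs⟩
    · rw [Filter.EventuallyLE, ae_restrict_iff' measurableSet_ball]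
      exact Filter.Eventually.of_forall fun s hs => (hpos s hs).le
    · exact hInt
  -- pointwise equality of the two vector fields on the ball
  have key : ∀ y ∈ Metric.ball (0 : E2) 1,
      (κ / (1 - ‖y‖ ^ 2) * f y) • y + (gradient f y + γ • Acal y (gradient f y))
        = M₀ y • (gradient (fun z => f z / M₀ z) y
            + γ • Acal y (gradient (fun z => f z / M₀ z) y)) := by
    intro y hy
    have h1 : ‖y‖ < 1 := by simpa using hy
    have hu2 : ‖y‖ ^ 2 < 1 := by
      have := pow_lt_one₀ (norm_nonneg y) h1 (two_ne_zero)
      simpa using this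
    have hu0 : (0:ℝ) ≤ ‖y‖ ^ 2 := sq_nonneg _
    have ha : (0:ℝ) < 1 - ‖y‖ ^ 2 := by linarith
    have hb : (0:ℝ) < 1 + γ * ‖y‖ ^ 2 := by nlinarith
    have hgpos : (0:ℝ) < (1 - ‖y‖ ^ 2) / (1 + γ * ‖y‖ ^ 2) := div_pos ha hb
    have hm : 0 < M₀ y := by
      rw [hM₀]
      exact mul_pos (inv_pos.mpr hZpos) (Real.rpow_pos_of_pos hgpos α)
    -- derivative of t ↦ Z₀⁻¹ * ((1-t)/(1+γt))^α at t = ‖y‖²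
    have hgt : HasDerivAt (fun t : ℝ => (1 - t) / (1 + γ * t))
        ((-(1 + γ)) / (1 + γ * ‖y‖ ^ 2) ^ 2) (‖y‖ ^ 2) := by
      have h1' : HasDerivAt (fun t : ℝ => 1 - t) (-1) (‖y‖ ^ 2) := by
        simpa using (hasDerivAt_id (‖y‖ ^ 2)).const_sub 1
      have h2' : HasDerivAt (fun t : ℝ => 1 + γ * t) γ (‖y‖ ^ 2) := by
        simpa using ((hasDerivAt_id (‖y‖ ^ 2)).const_mul γ).const_add 1
      have := h1'.div h2' hb.ne'
      refine this.congr_deriv ?_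
      ring
    set sc : ℝ := Z₀⁻¹ * (-(1 + γ) / (1 + γ * ‖y‖ ^ 2) ^ 2 * α *
        ((1 - ‖y‖ ^ 2) / (1 + γ * ‖y‖ ^ 2)) ^ (α - 1)) with hsc_def
    have hrp : HasDerivAt (fun t : ℝ => Z₀⁻¹ * ((1 - t) / (1 + γ * t)) ^ α)
        sc (‖y‖ ^ 2) :=
      (hgt.rpow_const (Or.inl hgpos.ne')).const_mul _
    have hMfun : M₀ = fun z : E2 => Z₀⁻¹ * ((1 - ‖z‖ ^ 2) / (1 + γ * ‖z‖ ^ 2)) ^ α :=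
      funext fun z => hM₀ z
    set cM : ℝ := -κ * M₀ y * ((1 - ‖y‖ ^ 2) * (1 + γ * ‖y‖ ^ 2))⁻¹ with hcM_def
    have hFM : HasFDerivAt M₀ (InnerProductSpace.toDual ℝ E2 (cM • y)) y := by
      have hcomp := hrp.comp_hasFDerivAt y (hasFDerivAt_normSq y)
      have hscalar : cM = sc * 2 := by
        rw [hcM_def, hsc_def, hM₀, Real.rpow_sub hgpos α 1, Real.rpow_one, hα_def]
        field_simp
      rw [hMfun]
      refine hcomp.congr_fderiv ?_
      ext w
      simp only [InnerProductSpace.toDual_apply_apply, ContinuousLinearMap.coe_smul',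
        Pi.smul_apply, smul_eq_mul, real_inner_smul_left]
      rw [hscalar]
      ring
    have hdf : DifferentiableAt ℝ f y := by
      have := (hf.differentiableOn (by norm_num)).differentiableAt
        (Metric.isOpen_ball.mem_nhds hy)
      exact this
    have hgf : HasGradientAt f (gradient f y) y := hdf.hasGradientAt
    -- gradient of f / M₀
    set c₁ : ℝ := -(f y) * ((M₀ y) ^ 2)⁻¹ * cM with hc1_def
    set G : E2 := (M₀ y)⁻¹ • gradient f y + c₁ • y with hG_def
    have hgh : HasGradientAt (fun z => f z / M₀ z) G y := by
      apply hasGradientAt_of_fderiv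
      have hinv : HasFDerivAt (fun z : E2 => (M₀ z)⁻¹)
          ((-((M₀ y) ^ 2)⁻¹) • InnerProductSpace.toDual ℝ E2 (cM • y)) y :=
        (hasDerivAt_inv hm.ne').comp_hasFDerivAt y hFM
      have hmul := (hgf.hasFDerivAt).mul hinv
      have hfun : (fun z => f z / M₀ z) = fun z => f z * (M₀ z)⁻¹ := by
        funext z; rw [div_eq_mul_inv]
      rw [hfun]
      have hE : (f y • ((-((M₀ y) ^ 2)⁻¹) • InnerProductSpace.toDual ℝ E2 (cM • y))
          + (M₀ y)⁻¹ • InnerProductSpace.toDual ℝ E2 (gradient f y))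
          = InnerProductSpace.toDual ℝ E2 G := by
        ext w
        simp only [InnerProductSpace.toDual_apply_apply, ContinuousLinearMap.add_apply,
          ContinuousLinearMap.coe_smul', Pi.smul_apply, smul_eq_mul, real_inner_smul_left,
          hG_def, inner_add_left, hc1_def]
        ring
      exact hE ▸ hmul
    rw [hgh.gradient]
    -- now pure algebra
    have hinner : ⟪y, y⟫ = ‖y‖ ^ 2 := real_inner_self_eq_norm_sq y
    rw [hG_def]
    simp only [Acal, inner_add_right, real_inner_smul_right, hinner, smul_add, smul_sub,
      smul_smul]
    have hmne : M₀ y ≠ 0 := hm.ne'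
    match_scalars
    · rw [hc1_def, hcM_def]
      field_simp
      ring
    · field_simp
  -- conclude equality of divergences
  intro r hr
  unfold diverg
  refine Finset.sum_congr rfl fun i _ => ?_
  congr 1
  apply Filter.EventuallyEq.fderiv_eq
  filter_upwards [Metric.isOpen_ball.mem_nhds hr] with y hy
  rw [key y hy]
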